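/- Let $u$ be a smooth section of a Hermitian line bundle with metric connection $\nabla$ over a Riemannian manifold $M^n$, and define the real two-form $\psi(u)(e_j,e_k) := 2\langle i\nabla_{e_j}u, \nabla_{e_k}u\rangle$. Then pointwise $|\psi(u)| \le |\nabla u|^2$, where the norm of a two-form $\omega$ is $|\omega|^2 = \sum_{j<k}\omega(e_j,e_k)^2$. -/

import Mathlib

open Finset

/-- Pointwise bound `|ψ(u)| ≤ |∇u|²`: at a point of an `n`-dimensional Riemannian manifold,
the covariant derivative `∇u` of a section of a Hermitian line bundle is a real-linear map
`f` from the tangent space (an `n`-dimensional real inner product space) to the fibre `≅ ℂ`;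
the real two-form `ψ(u)(e_j,e_k) = 2⟨i ∇_{e_j} u, ∇_{e_k} u⟩` (real part of the Hermitian
product) satisfies `√(∑_{j<k} ψ(e_j,e_k)²) ≤ ∑_j ‖f(e_j)‖²` for any orthonormal basis. -/
theorem statement0 {n : ℕ} {V : Type*} [NormedAddCommGroup V] [InnerProductSpace ℝ V]
    (b : OrthonormalBasis (Fin n) ℝ V) (f : V →ₗ[ℝ] ℂ)
    (ψ : Fin n → Fin n → ℝ)
    (hψ : ∀ j k, ψ j k = 2 * (Complex.I * f (b j) * (starRingEnd ℂ) (f (b k))).re) :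
    Real.sqrt (∑ j, ∑ k, if j < k then (ψ j k)^2 else 0) ≤ ∑ j, ‖f (b j)‖^2 := by
  set X : Fin n → ℝ := fun j => (f (b j)).re with hX
  set Y : Fin n → ℝ := fun j => (f (b j)).im with hY
  have hψ' : ∀ j k, ψ j k = 2 * (X j * Y k - Y j * X k) := by
    intro j k
    rw [hψ]
    simp [Complex.mul_re, Complex.mul_im, X, Y]
    ring
  set A : ℝ := ∑ j, X j ^ 2 with hA
  set B : ℝ := ∑ j, Y j ^ 2 with hB
  set C : ℝ := ∑ j, X j * Y j with hC
  set S : ℝ := ∑ j, ∑ k, if j < k then (ψ j k)^2 else 0 with hS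
  -- full sum equals 2 S
  have hsym : ∀ j k : Fin n, (ψ j k)^2 = (ψ k j)^2 := by
    intro j k; rw [hψ', hψ']; ring
  have hdiag : ∀ j : Fin n, ψ j j = 0 := by
    intro j; rw [hψ']; ring
  have hfull : (∑ j, ∑ k, (ψ j k)^2) = 2 * S := by
    have split : ∀ j k : Fin n, (ψ j k)^2 =
        (if j < k then (ψ j k)^2 else 0) + (if k < j then (ψ j k)^2 else 0) := by
      intro j k
      rcases lt_trichotomy j k with h | h | h
      · simp [h, not_lt_of_gt h]
      · simp [h, hdiag]
      · simp [h, not_lt_of_gt h]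
    calc (∑ j, ∑ k, (ψ j k)^2)
        = (∑ j, ∑ k, ((if j < k then (ψ j k)^2 else 0) + (if k < j then (ψ j k)^2 else 0))) := by
          simp_rw [← split]
      _ = S + ∑ j, ∑ k, (if k < j then (ψ j k)^2 else 0) := by
          rw [← Finset.sum_add_distrib]
          simp_rw [← Finset.sum_add_distrib]
      _ = S + ∑ k, ∑ j, (if k < j then (ψ j k)^2 else 0) := by
          rw [Finset.sum_comm]
      _ = S + S := by
          congr 1
          apply Finset.sum_congr rfl; intro k _
          apply Finset.sum_congr rfl; intro j _
          rw [hsym]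
      _ = 2 * S := by ring
  -- compute the full sum
  have hfull2 : (∑ j, ∑ k, (ψ j k)^2) = 8 * (A * B - C^2) := by
    have : ∀ j k : Fin n, (ψ j k)^2 =
        4 * (X j ^2 * Y k ^2) + 4 * (Y j ^2 * X k ^2) - 8 * ((X j * Y j) * (X k * Y k)) := by
      intro j k; rw [hψ']; ring
    simp_rw [this, Finset.sum_sub_distrib, Finset.sum_add_distrib, ← Finset.mul_sum,
      ← Finset.sum_mul, hA, hB, hC]
    ring_nf
  have hSval : S = 4 * (A * B - C^2) := by linarith
  have hRHS : (∑ j, ‖f (b j)‖^2) = A + B := by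
    rw [hA, hB, ← Finset.sum_add_distrib]
    apply Finset.sum_congr rfl; intro j _
    have := Complex.sq_norm (f (b j))
    rw [this, Complex.normSq_apply]; ring
  rw [hRHS]
  have hAB : 0 ≤ A + B := by
    have : (0:ℝ) ≤ ∑ j, ‖f (b j)‖^2 := Finset.sum_nonneg fun j _ => sq_nonneg _
    linarith [hRHS ▸ this]
  have hle : S ≤ (A + B)^2 := by nlinarith [sq_nonneg (A - B), sq_nonneg C]
  calc Real.sqrt S ≤ Real.sqrt ((A + B)^2) := Real.sqrt_le_sqrt hle
    _ = |A + B| := Real.sqrt_sq_eq_abs _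
    _ = A + B := abs_of_nonneg hAB
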